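/- Let q > 1 and let n ≥ 1 satisfy n ≤ 1 + ((q+1)/(q−1))^{q−1}. Then the Lehmer mean L_q of n arguments is weakly monotone on (0,∞)ⁿ: for every x ∈ (0,∞)ⁿ and every a > 0, L_q(x + a·𝟙) ≥ L_q(x), where 𝟙 = (1,1,…,1). -/

import Mathlib

open Real

lemma lehmer_amgm (q : ℝ) (hq : 1 < q) (z : ℝ) (hz : 0 < z) :
    q * z ^ (q - 1) ≤ (q + 1) * z ^ q + ((q - 1) / (q + 1)) ^ (q - 1) := by
  have hq0 : (0:ℝ) < q := by linarith
  have hq1 : (0:ℝ) < q - 1 := by linarith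
  have hq2 : (0:ℝ) < q + 1 := by linarith
  set l : ℝ := (q + 1) / (q - 1) with hl
  have hlpos : 0 < l := div_pos hq2 hq1
  have h := Real.geom_mean_le_arith_mean2_weighted
    (w₁ := (q-1)/q) (w₂ := 1/q) (p₁ := l * z ^ q) (p₂ := l ^ (1 - q))
    (by positivity) (by positivity) (by positivity) (by positivity)
    (by field_simp; ring)
  have hL : (l * z ^ q) ^ ((q-1)/q) * (l ^ (1-q)) ^ (1/q) = z ^ (q - 1) := by
    rw [Real.mul_rpow hlpos.le (rpow_nonneg hz.le _), ← Real.rpow_mul hz.le,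
      ← Real.rpow_mul hlpos.le, mul_assoc, mul_comm ((z ^ (q * ((q-1)/q)))) _,
      ← mul_assoc, ← Real.rpow_add hlpos]
    have e1 : (q - 1) / q + (1 - q) * (1 / q) = 0 := by field_simp; ring
    have e2 : q * ((q - 1) / q) = q - 1 := by field_simp
    rw [e1, e2, Real.rpow_zero, one_mul]
  rw [hL] at h
  have hlq : l ^ (1 - q) = ((q - 1) / (q + 1)) ^ (q - 1) := by
    have : (q - 1) / (q + 1) = l⁻¹ := by rw [hl, inv_div]
    rw [this, Real.inv_rpow hlpos.le, ← Real.rpow_neg hlpos.le]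
    ring_nf
  have := mul_le_mul_of_nonneg_left h hq0.le
  calc q * z ^ (q - 1) ≤ q * ((q - 1) / q * (l * z ^ q) + 1 / q * l ^ (1 - q)) := this
    _ = (q - 1) * l * z ^ q + l ^ (1 - q) := by field_simp
    _ = (q + 1) * z ^ q + ((q - 1) / (q + 1)) ^ (q - 1) := by
        rw [hlq, hl]; field_simp

lemma lehmer_key (q : ℝ) (hq : 1 < q) (n : ℕ) (hn : 1 ≤ n)
    (hnq : (n : ℝ) ≤ 1 + ((q + 1) / (q - 1)) ^ (q - 1))
    (y : Fin n → ℝ) (hy : ∀ i, 0 < y i) :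
    q * ((∑ i, y i ^ (q + 1)) * (∑ i, y i ^ (q - 1))) ≤
      (q + 1) * ((∑ i, y i ^ q) * (∑ i, y i ^ q)) := by
  have hq0 : (0:ℝ) < q := by linarith
  have hq1 : (0:ℝ) < q - 1 := by linarith
  have hq2 : (0:ℝ) < q + 1 := by linarith
  set C : ℝ := ((q - 1) / (q + 1)) ^ (q - 1) with hC
  have hCpos : 0 < C := Real.rpow_pos_of_pos (div_pos hq1 hq2) _
  have hCinv : ((q + 1) / (q - 1)) ^ (q - 1) = C⁻¹ := by
    rw [hC, ← Real.inv_rpow (by positivity), inv_div]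
  obtain ⟨j, -, hj⟩ := Finset.exists_max_image Finset.univ y ⟨⟨0, hn⟩, Finset.mem_univ _⟩
  set M : ℝ := y j with hM
  have hMpos : 0 < M := hy j
  have hMq : M ^ q = M ^ (q - 1) * M := by
    rw [← Real.rpow_add_one hMpos.ne' (q-1)]; ring_nf
  -- step 1 : ∑ y^{q+1} ≤ M * ∑ y^q
  have hstep1 : ∑ i, y i ^ (q + 1) ≤ M * ∑ i, y i ^ q := by
    rw [Finset.mul_sum]
    refine Finset.sum_le_sum fun i _ => ?_
    rw [Real.rpow_add_one (hy i).ne' q]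
    calc y i ^ q * y i ≤ y i ^ q * M :=
          mul_le_mul_of_nonneg_left (hj i (Finset.mem_univ i)) (Real.rpow_nonneg (hy i).le _)
      _ = M * y i ^ q := mul_comm _ _
  -- per-term bound
  have hterm : ∀ i, q * M * y i ^ (q - 1) ≤ (q + 1) * y i ^ q + C * M ^ q := by
    intro i
    have h := lehmer_amgm q hq (y i / M) (div_pos (hy i) hMpos)
    rw [Real.div_rpow (hy i).le hMpos.le, Real.div_rpow (hy i).le hMpos.le] at h
    have h2 := mul_le_mul_of_nonneg_right h (Real.rpow_nonneg hMpos.le q)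
    have e1 : q * (y i ^ (q - 1) / M ^ (q - 1)) * M ^ q = q * M * y i ^ (q - 1) := by
      rw [hMq]; field_simp [(Real.rpow_pos_of_pos hMpos (q-1)).ne']
    have e2 : ((q + 1) * (y i ^ q / M ^ q) + C) * M ^ q
        = (q + 1) * y i ^ q + C * M ^ q := by
      field_simp [(Real.rpow_pos_of_pos hMpos q).ne']
    rw [e1, e2] at h2
    exact h2
  -- the max term
  have hjterm : q * M * M ^ (q - 1) = (q + 1) * M ^ q - M ^ q := by
    rw [hMq]; ring
  -- card bound
  have hcard : ((Finset.univ.erase j).card : ℝ) * C ≤ 1 := by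
    have h1 : ((Finset.univ.erase j).card : ℝ) = (n : ℝ) - 1 := by
      rw [Finset.card_erase_of_mem (Finset.mem_univ j)]
      simp [Nat.cast_sub hn]
    have h2 : (n : ℝ) - 1 ≤ C⁻¹ := by rw [← hCinv]; linarith
    calc ((Finset.univ.erase j).card : ℝ) * C ≤ C⁻¹ * C := by
          apply mul_le_mul_of_nonneg_right _ hCpos.le; rw [h1]; exact h2
      _ = 1 := inv_mul_cancel₀ hCpos.ne'
  -- step 2 : q * M * ∑ y^{q-1} ≤ (q+1) * ∑ y^q
  have hstep2 : q * M * ∑ i, y i ^ (q - 1) ≤ (q + 1) * ∑ i, y i ^ q := by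
    have hsplit : ∀ (f : Fin n → ℝ), ∑ i, f i = f j + ∑ i ∈ Finset.univ.erase j, f i :=
      fun f => (Finset.add_sum_erase _ f (Finset.mem_univ j)).symm
    rw [Finset.mul_sum, hsplit (fun i => q * M * y i ^ (q-1)),
      hsplit (fun i => y i ^ q), mul_add]
    have hb : ∑ i ∈ Finset.univ.erase j, q * M * y i ^ (q - 1)
        ≤ ∑ i ∈ Finset.univ.erase j, ((q + 1) * y i ^ q) + ((Finset.univ.erase j).card : ℝ) * (C * M ^ q) := by
      calc ∑ i ∈ Finset.univ.erase j, q * M * y i ^ (q - 1)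
          ≤ ∑ i ∈ Finset.univ.erase j, ((q + 1) * y i ^ q + C * M ^ q) :=
            Finset.sum_le_sum fun i _ => hterm i
        _ = ∑ i ∈ Finset.univ.erase j, ((q + 1) * y i ^ q) + ((Finset.univ.erase j).card : ℝ) * (C * M ^ q) := by
            rw [Finset.sum_add_distrib, Finset.sum_const, nsmul_eq_mul]
    have hcard2 : ((Finset.univ.erase j).card : ℝ) * (C * M ^ q) ≤ M ^ q := by
      have := mul_le_mul_of_nonneg_right hcard (Real.rpow_nonneg hMpos.le q)
      calc ((Finset.univ.erase j).card : ℝ) * (C * M ^ q)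
          = ((Finset.univ.erase j).card : ℝ) * C * M ^ q := by ring
        _ ≤ 1 * M ^ q := this
        _ = M ^ q := one_mul _
    have hms : (q+1) * ∑ i ∈ Finset.univ.erase j, y i ^ q
        = ∑ i ∈ Finset.univ.erase j, (q+1) * y i ^ q := Finset.mul_sum _ _ _
    simp only [hM] at *
    linarith [hb, hcard2, hjterm, hms]
  -- combine
  have hpos1 : (0:ℝ) ≤ ∑ i, y i ^ (q - 1) :=
    Finset.sum_nonneg fun i _ => Real.rpow_nonneg (hy i).le _
  have hpos2 : (0:ℝ) ≤ ∑ i, y i ^ q :=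
    Finset.sum_nonneg fun i _ => Real.rpow_nonneg (hy i).le _
  calc q * ((∑ i, y i ^ (q + 1)) * (∑ i, y i ^ (q - 1)))
      ≤ q * ((M * ∑ i, y i ^ q) * (∑ i, y i ^ (q - 1))) := by
        apply mul_le_mul_of_nonneg_left _ hq0.le
        exact mul_le_mul_of_nonneg_right hstep1 hpos1
    _ = (∑ i, y i ^ q) * (q * M * ∑ i, y i ^ (q - 1)) := by ring
    _ ≤ (∑ i, y i ^ q) * ((q + 1) * ∑ i, y i ^ q) :=
        mul_le_mul_of_nonneg_left hstep2 hpos2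
    _ = (q + 1) * ((∑ i, y i ^ q) * (∑ i, y i ^ q)) := by ring


/-- For `q > 1` and `n ≥ 1` with `n ≤ 1 + ((q+1)/(q−1))^(q−1)`, the Lehmer
mean `L_q(x) = (Σᵢ xᵢ^(q+1))/(Σᵢ xᵢ^q)` of `n` arguments is weakly monotone on `(0,∞)ⁿ`:
`L_q(x + a·𝟙) ≥ L_q(x)` for every `x ∈ (0,∞)ⁿ` and `a > 0`. -/
theorem lehmer_weakly_monotone_pos (q : ℝ) (hq : 1 < q) (n : ℕ) (hn : 1 ≤ n)
    (hnq : (n : ℝ) ≤ 1 + ((q + 1) / (q - 1)) ^ (q - 1)) :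
    ∀ (x : Fin n → ℝ) (a : ℝ), (∀ i, 0 < x i) → 0 < a →
      (∑ i, x i ^ (q + 1)) / (∑ i, x i ^ q) ≤
        (∑ i, (x i + a) ^ (q + 1)) / (∑ i, (x i + a) ^ q) := by
  intro x a hx ha
  set N : ℝ → ℝ := fun b => ∑ i, (x i + b) ^ (q + 1) with hN
  set D : ℝ → ℝ := fun b => ∑ i, (x i + b) ^ q with hD
  set G : ℝ → ℝ := fun b => N b / D b with hG
  have hxb : ∀ b : ℝ, 0 ≤ b → ∀ i, 0 < x i + b := fun b hb i => by linarith [hx i]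
  have hne : (Finset.univ : Finset (Fin n)).Nonempty := ⟨⟨0, hn⟩, Finset.mem_univ _⟩
  have hDpos : ∀ b : ℝ, 0 ≤ b → 0 < D b := fun b hb =>
    Finset.sum_pos (fun i _ => Real.rpow_pos_of_pos (hxb b hb i) _) hne
  have hNder : ∀ b : ℝ, 0 ≤ b → HasDerivAt N ((q + 1) * ∑ i, (x i + b) ^ q) b := by
    intro b hb
    have h : HasDerivAt N (∑ i, (q + 1) * (x i + b) ^ q) b := by
      apply HasDerivAt.fun_sum
      intro i _
      have h1 : HasDerivAt (fun c => x i + c) 1 b := (hasDerivAt_id b).const_add (x i)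
      have h2 := h1.rpow_const (p := q + 1) (Or.inl (hxb b hb i).ne')
      simpa using h2
    simpa [Finset.mul_sum] using h
  have hDder : ∀ b : ℝ, 0 ≤ b → HasDerivAt D (q * ∑ i, (x i + b) ^ (q - 1)) b := by
    intro b hb
    have h : HasDerivAt D (∑ i, q * (x i + b) ^ (q - 1)) b := by
      apply HasDerivAt.fun_sum
      intro i _
      have h1 : HasDerivAt (fun c => x i + c) 1 b := (hasDerivAt_id b).const_add (x i)
      have h2 := h1.rpow_const (p := q) (Or.inl (hxb b hb i).ne')
      simpa using h2
    simpa [Finset.mul_sum] using h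
  have hGder : ∀ b : ℝ, 0 ≤ b → HasDerivAt G
      ((((q + 1) * ∑ i, (x i + b) ^ q) * D b - N b * (q * ∑ i, (x i + b) ^ (q - 1))) / (D b) ^ 2) b :=
    fun b hb => (hNder b hb).div (hDder b hb) (hDpos b hb).ne'
  have hnum : ∀ b : ℝ, 0 ≤ b →
      0 ≤ (((q + 1) * ∑ i, (x i + b) ^ q) * D b - N b * (q * ∑ i, (x i + b) ^ (q - 1))) := by
    intro b hb
    have hk := lehmer_key q hq n hn hnq (fun i => x i + b) (hxb b hb)
    simp only [hN, hD]
    nlinarith [hk]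
  have hmono : MonotoneOn G (Set.Ici (0:ℝ)) := by
    apply monotoneOn_of_deriv_nonneg (convex_Ici 0)
    · intro b hb
      exact (hGder b hb).continuousAt.continuousWithinAt
    · intro b hb
      rw [interior_Ici] at hb
      exact (hGder b (le_of_lt hb)).differentiableAt.differentiableWithinAt
    · intro b hb
      rw [interior_Ici] at hb
      rw [(hGder b (le_of_lt hb)).deriv]
      exact div_nonneg (hnum b (le_of_lt hb)) (sq_nonneg _)
  have := hmono (Set.self_mem_Ici) (Set.mem_Ici.mpr ha.le) ha.le
  simpa [hG, hN, hD] using this
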